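/- Let P, Q be probability distributions on a finite set V and let Q̂ be any probability distribution supported on a subset V' ⊆ V obtained by truncating Q and renormalizing. If the speculative sampling verification (accept x ~ Q̂ with probability min{1, P(x)/Q̂(x)}, else resample from norm(max(0, P − Q̂))) is applied with Q̂ in place of Q on both the acceptance test and the residual, then the marginal output distribution is still exactly P. -/
import Mathlib


open Finset

/-- Losslessness of TSLT: speculative sampling verification remains exact when
the draft distribution is replaced by a truncated-renormalized distribution
`Q̂` (used both in the acceptance test and in the residual). -/
theorem tslt_lossless {V : Type*} [Fintype V] [DecidableEq V]
    (P Q : V → ℝ)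
    (hP0 : ∀ v, 0 ≤ P v) (hP1 : ∑ v, P v = 1)
    (hQ0 : ∀ v, 0 ≤ Q v) (hQ1 : ∑ v, Q v = 1)
    (V' : Finset V) (ρ : ℝ)
    (hρ : ρ = ∑ v ∈ V', Q v) (hρpos : 0 < ρ)
    (Qh : V → ℝ) (hQh : ∀ v, Qh v = if v ∈ V' then Q v / ρ else 0)
    (Z : ℝ) (hZ : Z = ∑ x, max 0 (P x - Qh x)) (hZpos : 0 < Z) :
    ∀ x, Qh x * min 1 (P x / Qh x) +
      (∑ y, Qh y * (1 - min 1 (P y / Qh y))) * (max 0 (P x - Qh x) / Z) = P x := by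
  have hQh0 : ∀ v, 0 ≤ Qh v := by
    intro v; rw [hQh]
    split
    · exact div_nonneg (hQ0 v) hρpos.le
    · exact le_refl 0
  have key : ∀ v, Qh v * min 1 (P v / Qh v) = min (Qh v) (P v) := by
    intro v
    rcases eq_or_lt_of_le (hQh0 v) with h | h
    · rw [← h]; simp [min_eq_left (hP0 v)]
    · rw [mul_min_of_nonneg _ _ h.le, mul_one, mul_div_cancel₀ _ h.ne']
  have hQh1 : ∑ v, Qh v = 1 := by
    have : ∑ v, Qh v = ∑ v ∈ V', Q v / ρ := by
      rw [Finset.sum_congr rfl (fun v _ => hQh v), Finset.sum_ite_mem,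
        Finset.univ_inter]
    rw [this, ← Finset.sum_div, ← hρ, div_self hρpos.ne']
  have hmax : ∀ v, max 0 (P v - Qh v) = P v - min (Qh v) (P v) := by
    intro v
    rcases le_total (P v) (Qh v) with h | h
    · rw [max_eq_left (by linarith), min_eq_right h]; ring
    · rw [max_eq_right (by linarith), min_eq_left h]
  have hsum : (∑ y, Qh y * (1 - min 1 (P y / Qh y))) = Z := by
    have : ∀ y, Qh y * (1 - min 1 (P y / Qh y)) = Qh y - min (Qh y) (P y) := by
      intro y; rw [mul_sub, mul_one, key]
    rw [Finset.sum_congr rfl (fun y _ => this y), Finset.sum_sub_distrib, hQh1, hZ]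
    rw [Finset.sum_congr rfl (fun y _ => hmax y), Finset.sum_sub_distrib, hP1]
  intro x
  rw [key, hsum, mul_div_cancel₀ _ hZpos.ne', hmax]
  ring
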